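/- arXiv:2403.11013 — 5 statements merged into one kernel-verified Lean document; each statement's English description precedes it below -/
import Mathlib

section
/- Fix m ≥ 2 and points x_1,...,x_m ∈ ℝ^d. Let a = min_{i≠j} ‖x_i − x_j‖ and b = max_{i≠j} |‖x_i‖ − ‖x_j‖|. For any nonnegative weights w_1,...,w_m with ∑ w_i = 1, letting L = ∑_i w_i‖x_i‖ > 0, one has ‖∑_i w_i x_i‖ ≤ L − ((a² − b²)/(4L)) · ∑_i w_i(1 − w_i). -/
open scoped BigOperators

noncomputable def sval {d K : ℕ} (A : Matrix (Fin d) (Fin K) ℝ) (k : ℕ) : ℝ :=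
  ⨆ W : {W : Submodule ℝ (EuclideanSpace ℝ (Fin K)) // Module.finrank ℝ W = k},
    ⨅ x : {x : EuclideanSpace ℝ (Fin K) // x ∈ W.1 ∧ ‖x‖ = 1},
      ‖Matrix.toEuclideanLin A x.1‖

noncomputable def vnorm {d : ℕ} (x : Fin d → ℝ) : ℝ :=
  Real.sqrt (∑ i, x i ^ 2)

lemma vnorm_eq_norm {d : ℕ} (v : EuclideanSpace ℝ (Fin d)) : vnorm v = ‖v‖ := by
  rw [EuclideanSpace.norm_eq]
  simp [vnorm, sq_abs]

/-- norm deficit of a convex combination. -/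
theorem stmt_2 (d m : ℕ) (hm : 2 ≤ m) (x : Fin m → Fin d → ℝ)
    (a b : ℝ)
    (ha : a = ⨅ p : {p : Fin m × Fin m // p.1 ≠ p.2}, vnorm (x p.1.1 - x p.1.2))
    (hb : b = ⨆ p : {p : Fin m × Fin m // p.1 ≠ p.2}, |vnorm (x p.1.1) - vnorm (x p.1.2)|)
    (w : Fin m → ℝ) (hw : ∀ i, 0 ≤ w i) (hwsum : ∑ i, w i = 1)
    (L : ℝ) (hL : L = ∑ i, w i * vnorm (x i)) (hLpos : 0 < L) :
    vnorm (∑ i, w i • x i) ≤ L - ((a ^ 2 - b ^ 2) / (4 * L)) * ∑ i, w i * (1 - w i) := by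
  -- reinterpret points in EuclideanSpace
  set y : Fin m → EuclideanSpace ℝ (Fin d) := fun i => WithLp.toLp 2 (x i) with hy
  set S : EuclideanSpace ℝ (Fin d) := ∑ i, w i • y i with hSdef
  have hvS : vnorm (∑ i, w i • x i) = ‖S‖ := by
    simpa [hSdef, hy] using vnorm_eq_norm S
  have hn : ∀ i, vnorm (x i) = ‖y i‖ := fun i => vnorm_eq_norm (y i)
  -- a lower-bounds pairwise distances, b upper-bounds norm differences
  have ha0 : 0 ≤ a := by
    rw [ha]
    exact Real.iInf_nonneg fun p => Real.sqrt_nonneg _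
  have haP : ∀ i j, i ≠ j → a ≤ ‖y i - y j‖ := by
    intro i j hij
    have hbd : BddBelow (Set.range fun p : {p : Fin m × Fin m // p.1 ≠ p.2} =>
        vnorm (x p.1.1 - x p.1.2)) :=
      (Set.finite_range _).bddBelow
    have := ciInf_le hbd (⟨(i, j), hij⟩ : {p : Fin m × Fin m // p.1 ≠ p.2})
    rw [← ha] at this
    calc a ≤ vnorm (x i - x j) := this
      _ = ‖y i - y j‖ := by simpa [hy] using vnorm_eq_norm (y i - y j)
  have hbP : ∀ i j, i ≠ j → |‖y i‖ - ‖y j‖| ≤ b := by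
    intro i j hij
    have hbd : BddAbove (Set.range fun p : {p : Fin m × Fin m // p.1 ≠ p.2} =>
        |vnorm (x p.1.1) - vnorm (x p.1.2)|) :=
      (Set.finite_range _).bddAbove
    have := le_ciSup hbd (⟨(i, j), hij⟩ : {p : Fin m × Fin m // p.1 ≠ p.2})
    rw [← hb] at this
    simpa [hn] using this
  have hb0 : 0 ≤ b := le_trans (abs_nonneg _) (hbP ⟨0, by omega⟩ ⟨1, by omega⟩ (by
    simp [Fin.ext_iff]))
  set t : ℝ := (b ^ 2 - a ^ 2) / 2 with ht
  -- key pairwise inner product bound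
  have h1 : ∀ i j, w i * w j * (inner ℝ (y i) (y j) : ℝ) ≤
      w i * w j * (‖y i‖ * ‖y j‖) + (if i = j then 0 else w i * w j * t) := by
    intro i j
    by_cases h : i = j
    · subst h
      rw [if_pos rfl, add_zero, real_inner_self_eq_norm_mul_norm]
    · simp only [h, if_false]
      have hinner : (inner ℝ (y i) (y j) : ℝ) ≤ ‖y i‖ * ‖y j‖ + t := by
        have hns : ‖y i - y j‖ ^ 2 = ‖y i‖ ^ 2 - 2 * (inner ℝ (y i) (y j) : ℝ) + ‖y j‖ ^ 2 :=
          norm_sub_sq_real (y i) (y j)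
      -- a^2 ≤ ‖y i - y j‖^2
        have h2 : a ^ 2 ≤ ‖y i - y j‖ ^ 2 := by
          have := haP i j h
          nlinarith
        have h3 : (‖y i‖ - ‖y j‖) ^ 2 ≤ b ^ 2 := by
          calc (‖y i‖ - ‖y j‖) ^ 2 = |‖y i‖ - ‖y j‖| ^ 2 := (sq_abs _).symm
            _ ≤ b ^ 2 := pow_le_pow_left₀ (abs_nonneg _) (hbP i j h) 2
        rw [ht]
        nlinarith
      have hwij : 0 ≤ w i * w j := mul_nonneg (hw i) (hw j)
      nlinarith [mul_le_mul_of_nonneg_left hinner hwij]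
  have hS2 : ‖S‖ ^ 2 = ∑ i, ∑ j, w i * w j * (inner ℝ (y i) (y j) : ℝ) := by
    rw [← real_inner_self_eq_norm_sq, hSdef, sum_inner]
    refine Finset.sum_congr rfl fun i _ => ?_
    rw [inner_sum]
    refine Finset.sum_congr rfl fun j _ => ?_
    rw [real_inner_smul_left, real_inner_smul_right]
    ring
  have hsum : ∑ i, ∑ j, (w i * w j * (‖y i‖ * ‖y j‖) + (if i = j then 0 else w i * w j * t))
      = L ^ 2 + t * (1 - ∑ i, w i ^ 2) := by
    rw [Finset.sum_congr rfl fun i _ => Finset.sum_add_distrib, Finset.sum_add_distrib]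
    congr 1
    · rw [hL]
      simp_rw [hn]
      rw [sq, Finset.sum_mul_sum]
      exact Finset.sum_congr rfl fun i _ => Finset.sum_congr rfl fun j _ => by ring
    · have hrow : ∀ i, ∑ j, (if i = j then 0 else w i * w j * t)
          = (∑ j, w i * w j * t) - w i * w i * t := by
        intro i
        have : ∀ j, (if i = j then 0 else w i * w j * t)
            = w i * w j * t - (if i = j then w i * w j * t else 0) := by
          intro j; by_cases h : i = j <;> simp [h]
        rw [Finset.sum_congr rfl fun j _ => this j, Finset.sum_sub_distrib,
          Finset.sum_ite_eq Finset.univ i (fun j => w i * w j * t)]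
        simp
      rw [Finset.sum_congr rfl fun i _ => hrow i, Finset.sum_sub_distrib]
      have e1 : ∑ i, ∑ j, w i * w j * t = t := by
        have h' : ((∑ i, w i) * (∑ j, w j)) * t = ∑ i, ∑ j, w i * w j * t := by
          rw [Finset.sum_mul_sum, Finset.sum_mul]
          exact Finset.sum_congr rfl fun i _ => by rw [Finset.sum_mul]
        rw [← h', hwsum]; ring
      have e2 : ∑ i, w i * w i * t = (∑ i, w i ^ 2) * t := by
        rw [Finset.sum_mul]
        refine Finset.sum_congr rfl fun i _ => by ring
      rw [e1, e2]; ring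
  have hW : ∑ i, w i * (1 - w i) = 1 - ∑ i, w i ^ 2 := by
    simp_rw [mul_sub, mul_one]
    rw [Finset.sum_sub_distrib, hwsum]
    simp [sq]
  have hbound : ‖S‖ ^ 2 ≤ L ^ 2 + t * (1 - ∑ i, w i ^ 2) := by
    rw [hS2, ← hsum]
    exact Finset.sum_le_sum fun i _ => Finset.sum_le_sum fun j _ => h1 i j
  rw [hvS, hW]
  have hts : t = -(((a ^ 2 - b ^ 2) / (4 * L)) * (2 * L)) := by
    rw [ht]; field_simp; ring
  rw [hts] at hbound
  set q : ℝ := (a ^ 2 - b ^ 2) / (4 * L) with hq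
  set W : ℝ := 1 - ∑ i, w i ^ 2 with hWdef
  have hs0 : 0 ≤ ‖S‖ := norm_nonneg _
  nlinarith [sq_nonneg (L - ‖S‖), hbound, hLpos, hs0]
end

section
/- With x_1,...,x_m, weights w_i, a, b, L as above, one has ‖∑_i w_i x_i‖² ≤ L² − (1/2)(a² − b²) ∑_i w_i(1 − w_i). -/
open scoped BigOperators

lemma vnorm_nonneg' {d : ℕ} (y : Fin d → ℝ) : 0 ≤ vnorm y := Real.sqrt_nonneg _

lemma vnorm_sq' {d : ℕ} (y : Fin d → ℝ) : vnorm y ^ 2 = ∑ k, y k ^ 2 :=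
  Real.sq_sqrt (by positivity)

/-- squared-norm deficit of a convex combination. -/
theorem stmt_3 (d m : ℕ) (hm : 2 ≤ m) (x : Fin m → Fin d → ℝ)
    (a b : ℝ)
    (ha : a = ⨅ p : {p : Fin m × Fin m // p.1 ≠ p.2}, vnorm (x p.1.1 - x p.1.2))
    (hb : b = ⨆ p : {p : Fin m × Fin m // p.1 ≠ p.2}, |vnorm (x p.1.1) - vnorm (x p.1.2)|)
    (w : Fin m → ℝ) (hw : ∀ i, 0 ≤ w i) (hwsum : ∑ i, w i = 1)
    (L : ℝ) (hL : L = ∑ i, w i * vnorm (x i)) :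
    vnorm (∑ i, w i • x i) ^ 2 ≤ L ^ 2 - (1 / 2) * (a ^ 2 - b ^ 2) * ∑ i, w i * (1 - w i) := by
  haveI : Nonempty {p : Fin m × Fin m // p.1 ≠ p.2} :=
    ⟨⟨(⟨0, by omega⟩, ⟨1, by omega⟩), by simp [Fin.ext_iff]⟩⟩
  set c : ℝ := (1 / 2) * (a ^ 2 - b ^ 2) with hc
  set n : Fin m → ℝ := fun i => vnorm (x i) with hn
  set ip : Fin m → Fin m → ℝ := fun i j => ∑ k, x i k * x j k with hip
  -- a lower bound, b upper bound
  have ha0 : 0 ≤ a := by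
    rw [ha]
    exact le_ciInf fun p => vnorm_nonneg' _
  have ha' : ∀ i j, i ≠ j → a ≤ vnorm (x i - x j) := by
    intro i j h
    rw [ha]
    have hbdd : BddBelow (Set.range fun p : {p : Fin m × Fin m // p.1 ≠ p.2} =>
        vnorm (x p.1.1 - x p.1.2)) := Set.Finite.bddBelow (Set.finite_range _)
    exact ciInf_le hbdd ⟨(i, j), h⟩
  have hb' : ∀ i j, i ≠ j → |vnorm (x i) - vnorm (x j)| ≤ b := by
    intro i j h
    rw [hb]
    have hbdd : BddAbove (Set.range fun p : {p : Fin m × Fin m // p.1 ≠ p.2} =>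
        |vnorm (x p.1.1) - vnorm (x p.1.2)|) := Set.Finite.bddAbove (Set.finite_range _)
    exact le_ciSup hbdd ⟨(i, j), h⟩
  have key : ∀ i j, i ≠ j → c ≤ n i * n j - ip i j := by
    intro i j h
    have e : vnorm (x i - x j) ^ 2 = n i ^ 2 + n j ^ 2 - 2 * ip i j := by
      simp only [vnorm_sq', hn, hip, Pi.sub_apply]
      rw [Finset.mul_sum, ← Finset.sum_add_distrib, ← Finset.sum_sub_distrib]
      exact Finset.sum_congr rfl fun k _ => by ring
    have hab : a ^ 2 ≤ vnorm (x i - x j) ^ 2 := pow_le_pow_left₀ ha0 (ha' i j h) 2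
    have hbb : (n i - n j) ^ 2 ≤ b ^ 2 := by
      have := pow_le_pow_left₀ (abs_nonneg (n i - n j)) (hb' i j h) 2
      rwa [sq_abs] at this
    nlinarith
  have hii : ∀ i, n i * n i - ip i i = 0 := by
    intro i
    have := vnorm_sq' (x i)
    simp only [hn, hip]
    nlinarith [vnorm_sq' (x i), Finset.sum_congr rfl (fun k (_ : k ∈ Finset.univ) => (sq (x i k)).symm)]
  -- expansion of ‖∑ w_i x_i‖²
  have hsumsq : vnorm (∑ i, w i • x i) ^ 2 = ∑ i, ∑ j, w i * w j * ip i j := by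
    rw [vnorm_sq']
    have : ∀ k, (∑ i, w i • x i) k = ∑ i, w i * x i k := by
      intro k; simp [Finset.sum_apply]
    simp only [this]
    have : ∀ k : Fin d, (∑ i, w i * x i k) ^ 2 = ∑ i, ∑ j, (w i * x i k) * (w j * x j k) := by
      intro k; rw [sq, Finset.sum_mul_sum]
    simp only [this]
    rw [Finset.sum_comm]
    refine Finset.sum_congr rfl fun i _ => ?_
    rw [Finset.sum_comm]
    refine Finset.sum_congr rfl fun j _ => ?_
    simp only [hip]
    rw [Finset.mul_sum]
    exact Finset.sum_congr rfl fun k _ => by ring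
  have hLsq : L ^ 2 = ∑ i, ∑ j, w i * w j * (n i * n j) := by
    rw [hL, sq, Finset.sum_mul_sum]
    refine Finset.sum_congr rfl fun i _ => Finset.sum_congr rfl fun j _ => by ring
  -- per-row bound
  have step : ∀ i, c * (w i * (1 - w i)) ≤ ∑ j, w i * w j * (n i * n j - ip i j) := by
    intro i
    have h1 : ∑ j, w i * w j * (if i = j then 0 else c) ≤
        ∑ j, w i * w j * (n i * n j - ip i j) := by
      refine Finset.sum_le_sum fun j _ => ?_
      by_cases h : i = j
      · simp [h, hii j]
      · simp only [if_neg h]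
        exact mul_le_mul_of_nonneg_left (key i j h) (mul_nonneg (hw i) (hw j))
    have h2 : ∑ j, w i * w j * (if i = j then 0 else c)
        = c * (w i * (1 - w i)) := by
      have : ∀ j, w i * w j * (if i = j then 0 else c)
          = w i * w j * c - (if i = j then w i * w j * c else 0) := by
        intro j; split <;> ring
      simp only [this]
      rw [Finset.sum_sub_distrib, Finset.sum_ite_eq, if_pos (Finset.mem_univ i)]
      have : ∑ j, w i * w j * c = w i * c := by
        rw [← Finset.sum_mul, ← Finset.mul_sum, hwsum]; ring
      rw [this]; ring
    linarith
  have total : c * ∑ i, w i * (1 - w i) ≤ ∑ i, ∑ j, w i * w j * (n i * n j - ip i j) := by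
    rw [Finset.mul_sum]
    exact Finset.sum_le_sum fun i _ => step i
  have expand : ∑ i, ∑ j, w i * w j * (n i * n j - ip i j)
      = (∑ i, ∑ j, w i * w j * (n i * n j)) - ∑ i, ∑ j, w i * w j * ip i j := by
    rw [← Finset.sum_sub_distrib]
    refine Finset.sum_congr rfl fun i _ => ?_
    rw [← Finset.sum_sub_distrib]
    exact Finset.sum_congr rfl fun j _ => by ring
  rw [hsumsq, hLsq]
  rw [expand] at total
  linarith
end

section
/- Fix 1 ≤ s ≤ K−2 and v_1,...,v_K ∈ ℝ^d with V = [v_1,...,v_K]. Suppose at least s of the vertices satisfy ‖v_k‖ ≤ δ, and s²_{K−1−s}(V) ≥ 2(K−2)δ². Then max_k ‖v_k‖ ≥ √((K−s−1)/(2(K−s)))·s_{K−1−s}(V) ≥ (1/2)·s_{K−1−s}(V). -/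
open scoped BigOperators

lemma sval_nonneg {d K : ℕ} (A : Matrix (Fin d) (Fin K) ℝ) (k : ℕ) : 0 ≤ sval A k :=
  Real.iSup_nonneg fun _ => Real.iInf_nonneg fun _ => norm_nonneg _

lemma toEuclideanLin_norm_sq {d K : ℕ} (A : Matrix (Fin d) (Fin K) ℝ)
    (x : EuclideanSpace ℝ (Fin K)) :
    ‖Matrix.toEuclideanLin A x‖ ^ 2 = ∑ r : Fin d, (∑ k : Fin K, A r k * x k) ^ 2 := by
  rw [EuclideanSpace.norm_eq, Real.sq_sqrt (by positivity)]
  refine Finset.sum_congr rfl fun r _ => ?_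
  rw [Matrix.toEuclideanLin_apply]
  simp [Matrix.mulVec, dotProduct, sq_abs]

/-- row `r` of `A` as a Euclidean vector -/
noncomputable def rowVec {d K : ℕ} (A : Matrix (Fin d) (Fin K) ℝ) (r : Fin d) :
    EuclideanSpace ℝ (Fin K) := (WithLp.equiv 2 (Fin K → ℝ)).symm (fun k => A r k)

lemma inner_rowVec {d K : ℕ} (A : Matrix (Fin d) (Fin K) ℝ) (r : Fin d)
    (x : EuclideanSpace ℝ (Fin K)) :
    @inner ℝ _ _ (rowVec A r) x = ∑ k : Fin K, A r k * x k := by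
  rw [PiLp.inner_apply]
  refine Finset.sum_congr rfl fun k _ => ?_
  simp [rowVec, RCLike.inner_apply, mul_comm]

lemma norm_rowVec_sq {d K : ℕ} (A : Matrix (Fin d) (Fin K) ℝ) (r : Fin d) :
    ‖rowVec A r‖ ^ 2 = ∑ k : Fin K, A r k ^ 2 := by
  rw [EuclideanSpace.norm_eq, Real.sq_sqrt (by positivity)]
  refine Finset.sum_congr rfl fun k _ => ?_
  simp [rowVec, sq_abs]

lemma frob_bound {d K : ℕ} (A : Matrix (Fin d) (Fin K) ℝ) (m : ℕ) (hm1 : 1 ≤ m)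
    (hmK : m ≤ K) :
    (m : ℝ) * sval A m ^ 2 ≤ ∑ k : Fin K, ∑ i : Fin d, A i k ^ 2 := by
  set F : ℝ := ∑ k : Fin K, ∑ i : Fin d, A i k ^ 2 with hF
  have hF0 : 0 ≤ F := Finset.sum_nonneg fun _ _ => Finset.sum_nonneg fun _ _ => sq_nonneg _
  have hm0 : (0 : ℝ) < m := by exact_mod_cast hm1
  -- nonempty index type for the sup
  have hne : Nonempty {W : Submodule ℝ (EuclideanSpace ℝ (Fin K)) // Module.finrank ℝ W = m} := by
    obtain ⟨f, hf⟩ := exists_linearIndependent_of_le_finrank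
      (R := ℝ) (M := EuclideanSpace ℝ (Fin K)) (n := m) (by rw [finrank_euclideanSpace_fin]; exact hmK)
    exact ⟨⟨Submodule.span ℝ (Set.range f), by rw [finrank_span_eq_card hf, Fintype.card_fin]⟩⟩
  -- each inf is at most √(F/m)
  have key : ∀ W : {W : Submodule ℝ (EuclideanSpace ℝ (Fin K)) // Module.finrank ℝ W = m},
      (⨅ x : {x : EuclideanSpace ℝ (Fin K) // x ∈ W.1 ∧ ‖x‖ = 1},
        ‖Matrix.toEuclideanLin A x.1‖) ≤ Real.sqrt (F / m) := by
    intro ⟨W, hW⟩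
    haveI : FiniteDimensional ℝ W := FiniteDimensional.finiteDimensional_submodule W
    set c : ℝ := ⨅ x : {x : EuclideanSpace ℝ (Fin K) // x ∈ W ∧ ‖x‖ = 1},
        ‖Matrix.toEuclideanLin A x.1‖ with hc
    have hc0 : 0 ≤ c := Real.iInf_nonneg fun _ => norm_nonneg _
    set b : OrthonormalBasis (Fin m) ℝ W := (stdOrthonormalBasis ℝ W).reindex (finCongr hW)
    set e : Fin m → EuclideanSpace ℝ (Fin K) := (W.subtypeₗᵢ : W →ₗᵢ[ℝ] _) ∘ b with he_def
    have he : Orthonormal ℝ e := b.orthonormal.comp_linearIsometry _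
    have hbdd : BddBelow (Set.range fun x : {x : EuclideanSpace ℝ (Fin K) // x ∈ W ∧ ‖x‖ = 1} =>
        ‖Matrix.toEuclideanLin A x.1‖) := ⟨0, fun y ⟨x, hx⟩ => hx ▸ norm_nonneg _⟩
    have hce : ∀ i : Fin m, c ≤ ‖Matrix.toEuclideanLin A (e i)‖ := by
      intro i
      exact ciInf_le hbdd ⟨e i, (b i).2, he.1 i⟩
    have hsum : (m : ℝ) * c ^ 2 ≤ ∑ i : Fin m, ‖Matrix.toEuclideanLin A (e i)‖ ^ 2 := by
      calc (m : ℝ) * c ^ 2 = ∑ _i : Fin m, c ^ 2 := by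
            simp [Finset.sum_const, mul_comm]
        _ ≤ ∑ i : Fin m, ‖Matrix.toEuclideanLin A (e i)‖ ^ 2 :=
            Finset.sum_le_sum fun i _ => pow_le_pow_left₀ hc0 (hce i) 2
    have hbessel : ∑ i : Fin m, ‖Matrix.toEuclideanLin A (e i)‖ ^ 2 ≤ F := by
      have h1 : ∀ i, ‖Matrix.toEuclideanLin A (e i)‖ ^ 2
          = ∑ r : Fin d, ‖@inner ℝ _ _ (e i) (rowVec A r)‖ ^ 2 := by
        intro i
        rw [toEuclideanLin_norm_sq]
        refine Finset.sum_congr rfl fun r _ => ?_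
        rw [real_inner_comm, inner_rowVec, Real.norm_eq_abs, sq_abs]
      calc ∑ i : Fin m, ‖Matrix.toEuclideanLin A (e i)‖ ^ 2
          = ∑ r : Fin d, ∑ i : Fin m, ‖@inner ℝ _ _ (e i) (rowVec A r)‖ ^ 2 := by
            rw [← Finset.sum_comm]; exact Finset.sum_congr rfl fun i _ => h1 i
        _ ≤ ∑ r : Fin d, ‖rowVec A r‖ ^ 2 :=
            Finset.sum_le_sum fun r _ => he.sum_inner_products_le (rowVec A r)
        _ = F := by
            rw [hF, Finset.sum_comm]
            exact Finset.sum_congr rfl fun r _ => norm_rowVec_sq A r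
    have hc2 : c ^ 2 ≤ F / m := by
      rw [le_div_iff₀ hm0]
      nlinarith [hsum.trans hbessel]
    calc c = Real.sqrt (c ^ 2) := (Real.sqrt_sq hc0).symm
      _ ≤ Real.sqrt (F / m) := Real.sqrt_le_sqrt hc2
  have hs : sval A m ≤ Real.sqrt (F / m) := ciSup_le key
  have h2 : sval A m ^ 2 ≤ F / m := by
    have := pow_le_pow_left₀ (sval_nonneg A m) hs 2
    rwa [Real.sq_sqrt (by positivity)] at this
  calc (m : ℝ) * sval A m ^ 2 ≤ (m : ℝ) * (F / m) := by
        exact mul_le_mul_of_nonneg_left h2 (le_of_lt hm0)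
    _ = F := by field_simp

/-- lower bound on max_k ‖v_k‖ when s vertices are small. -/
theorem stmt_9 (d K s : ℕ) (hs1 : 1 ≤ s) (hs2 : s ≤ K - 2)
    (V : Matrix (Fin d) (Fin K) ℝ) (δ : ℝ) (hδ : 0 ≤ δ)
    (S : Finset (Fin K)) (hcard : s ≤ S.card)
    (hsmall : ∀ k ∈ S, vnorm (fun i => V i k) ≤ δ)
    (hgap : 2 * ((K : ℝ) - 2) * δ ^ 2 ≤ sval V (K - 1 - s) ^ 2) :
    Real.sqrt (((K : ℝ) - s - 1) / (2 * ((K : ℝ) - s))) * sval V (K - 1 - s) ≤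
        (⨆ k : Fin K, vnorm (fun i => V i k)) ∧
      (1 / 2) * sval V (K - 1 - s) ≤
        Real.sqrt (((K : ℝ) - s - 1) / (2 * ((K : ℝ) - s))) * sval V (K - 1 - s) := by
  have hK3 : 3 ≤ K := by omega
  set m : ℕ := K - 1 - s with hm_def
  have hm1 : 1 ≤ m := by omega
  have hmK : m ≤ K := by omega
  have hmR : (m : ℝ) = (K : ℝ) - s - 1 := by
    have : (m : ℕ) = K - 1 - s := rfl
    push_cast [hm_def]
    have h1 : s + 1 ≤ K := by omega
    rw [Nat.cast_sub (by omega : s ≤ K - 1), Nat.cast_sub (by omega : 1 ≤ K)]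
    push_cast; ring
  have hKs : (s : ℝ) ≤ (K : ℝ) - 2 := by
    have : s + 2 ≤ K := by omega
    have := (Nat.cast_le (α := ℝ)).2 this
    push_cast at this; linarith
  have hK2 : (0 : ℝ) < (K : ℝ) - 2 := by
    have : (3 : ℝ) ≤ K := by exact_mod_cast hK3
    linarith
  have hKsub : (0 : ℝ) < (K : ℝ) - s := by linarith [hKs]
  set σ : ℝ := sval V m with hσ_def
  have hσ0 : 0 ≤ σ := sval_nonneg V m
  set M : ℝ := ⨆ k : Fin K, vnorm (fun i => V i k) with hM_def
  have hvn : ∀ k : Fin K, 0 ≤ vnorm (fun i => V i k) := fun k => Real.sqrt_nonneg _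
  have hM0 : 0 ≤ M := Real.iSup_nonneg hvn
  haveI : Nonempty (Fin K) := ⟨⟨0, by omega⟩⟩
  have hMk : ∀ k : Fin K, vnorm (fun i => V i k) ≤ M := fun k =>
    le_ciSup (f := fun k : Fin K => vnorm fun i => V i k)
      (Set.Finite.bddAbove (Set.finite_range _)) k
  -- Frobenius bound
  have hfrob : (m : ℝ) * σ ^ 2 ≤ ∑ k : Fin K, ∑ i : Fin d, V i k ^ 2 :=
    frob_bound V m hm1 hmK
  -- upper bound on Frobenius norm
  obtain ⟨S', hS'sub, hS'card⟩ := Finset.exists_subset_card_eq hcard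
  have hvnsq : ∀ k : Fin K, vnorm (fun i => V i k) ^ 2 = ∑ i : Fin d, V i k ^ 2 := fun k =>
    Real.sq_sqrt (Finset.sum_nonneg fun _ _ => sq_nonneg _)
  have hupper : ∑ k : Fin K, ∑ i : Fin d, V i k ^ 2
      ≤ (s : ℝ) * δ ^ 2 + ((K : ℝ) - s) * M ^ 2 := by
    have hsplit : ∑ k : Fin K, ∑ i : Fin d, V i k ^ 2
        = ∑ k ∈ S', (∑ i : Fin d, V i k ^ 2) + ∑ k ∈ S'ᶜ, (∑ i : Fin d, V i k ^ 2) := by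
      rw [Finset.sum_add_sum_compl]
    rw [hsplit]
    have h1 : ∑ k ∈ S', (∑ i : Fin d, V i k ^ 2) ≤ (s : ℝ) * δ ^ 2 := by
      calc ∑ k ∈ S', (∑ i : Fin d, V i k ^ 2) ≤ ∑ _k ∈ S', δ ^ 2 := by
            refine Finset.sum_le_sum fun k hk => ?_
            rw [← hvnsq k]
            exact pow_le_pow_left₀ (hvn k) (hsmall k (hS'sub hk)) 2
        _ = (s : ℝ) * δ ^ 2 := by rw [Finset.sum_const, hS'card]; push_cast; ring
    have h2 : ∑ k ∈ S'ᶜ, (∑ i : Fin d, V i k ^ 2) ≤ ((K : ℝ) - s) * M ^ 2 := by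
      calc ∑ k ∈ S'ᶜ, (∑ i : Fin d, V i k ^ 2) ≤ ∑ _k ∈ S'ᶜ, M ^ 2 := by
            refine Finset.sum_le_sum fun k _ => ?_
            rw [← hvnsq k]
            exact pow_le_pow_left₀ (hvn k) (hMk k) 2
        _ = ((K : ℝ) - s) * M ^ 2 := by
            rw [Finset.sum_const, Finset.card_compl, hS'card, Fintype.card_fin,
              nsmul_eq_mul, Nat.cast_sub (by omega : s ≤ K)]
    linarith
  -- arithmetic
  have hδ2 : (s : ℝ) * δ ^ 2 ≤ ((m : ℝ) / 2) * σ ^ 2 := by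
    have hδσ : δ ^ 2 ≤ σ ^ 2 / (2 * ((K : ℝ) - 2)) := by
      rw [le_div_iff₀ (by linarith)]
      linarith [hgap]
    have hsm : (s : ℝ) ≤ (m : ℝ) * ((K : ℝ) - 2) := by
      have hm1R : (1 : ℝ) ≤ (m : ℝ) := by exact_mod_cast hm1
      nlinarith
    calc (s : ℝ) * δ ^ 2 ≤ (s : ℝ) * (σ ^ 2 / (2 * ((K : ℝ) - 2))) :=
          mul_le_mul_of_nonneg_left hδσ (by positivity)
      _ ≤ ((m : ℝ) / 2) * σ ^ 2 := by
          rw [mul_div_assoc', div_le_iff₀ (by linarith : (0:ℝ) < 2 * ((K:ℝ) - 2))]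
          nlinarith [sq_nonneg σ]
  have hM2 : (((K : ℝ) - s - 1) / (2 * ((K : ℝ) - s))) * σ ^ 2 ≤ M ^ 2 := by
    have hmain : ((m : ℝ) / 2) * σ ^ 2 ≤ ((K : ℝ) - s) * M ^ 2 := by linarith
    rw [div_mul_eq_mul_div, div_le_iff₀ (by linarith)]
    rw [← hmR]
    nlinarith
  have hcnn : 0 ≤ ((K : ℝ) - s - 1) / (2 * ((K : ℝ) - s)) := by
    apply div_nonneg <;> [skip; linarith]
    rw [← hmR]; positivity
  have main : Real.sqrt (((K : ℝ) - s - 1) / (2 * ((K : ℝ) - s))) * σ ≤ M := by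
    calc Real.sqrt (((K : ℝ) - s - 1) / (2 * ((K : ℝ) - s))) * σ
        = Real.sqrt ((((K : ℝ) - s - 1) / (2 * ((K : ℝ) - s))) * σ ^ 2) := by
          rw [Real.sqrt_mul hcnn, Real.sqrt_sq hσ0]
      _ ≤ Real.sqrt (M ^ 2) := Real.sqrt_le_sqrt hM2
      _ = M := Real.sqrt_sq hM0
  refine ⟨main, ?_⟩
  have hquarter : (1 : ℝ) / 4 ≤ ((K : ℝ) - s - 1) / (2 * ((K : ℝ) - s)) := by
    rw [div_le_div_iff₀ (by norm_num) (by linarith)]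
    linarith
  have : (1 : ℝ) / 2 ≤ Real.sqrt (((K : ℝ) - s - 1) / (2 * ((K : ℝ) - s))) := by
    have h := Real.sqrt_le_sqrt hquarter
    rwa [show ((1 : ℝ) / 4) = (1/2 : ℝ)^2 by norm_num, Real.sqrt_sq (by norm_num)] at h
  exact mul_le_mul_of_nonneg_right this hσ0
end

section
/- With V, G, Ṽ = V − v̄1_K' (v̄ the mean of columns of V) as above, and G positive semidefinite with G1_K = 0, one has λ_{K−1}(G)·ṼṼ' ⪯ VGV' ⪯ λ_1(G)·ṼṼ' in the positive semidefinite (Loewner) order. -/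
open scoped BigOperators
open Matrix

open Metric in
lemma exists_min_eigen {F : Type*} [NormedAddCommGroup F] [InnerProductSpace ℝ F]
    [FiniteDimensional ℝ F] [Nontrivial F] (T : F →ₗ[ℝ] F) (hT : T.IsSymmetric) :
    ∃ (z : F) (μ : ℝ), ‖z‖ = 1 ∧ T z = μ • z ∧
      ∀ w : F, ‖w‖ = 1 → μ ≤ inner ℝ (T w) w := by
  have : CompleteSpace F := FiniteDimensional.complete ℝ F
  let T' := hT.toSelfAdjoint
  have H₁ : IsCompact (sphere (0 : F) 1) := isCompact_sphere _ _
  obtain ⟨x, hx⟩ : ∃ x : F, x ≠ 0 := exists_ne 0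
  have H₂ : (sphere (0 : F) 1).Nonempty := ⟨‖x‖⁻¹ • x, by
    simp [norm_smul, norm_inv, inv_mul_cancel₀ (norm_ne_zero_iff.mpr hx)]⟩
  obtain ⟨x₀, hx₀mem, hmin⟩ :=
    H₁.exists_isMinOn H₂ T'.val.reApplyInnerSelf_continuous.continuousOn
  have hx₀norm : ‖x₀‖ = 1 := by simpa using hx₀mem
  have hx₀ne : x₀ ≠ 0 := by
    intro h; rw [h] at hx₀norm; simp at hx₀norm
  have hmin' : IsMinOn T'.val.reApplyInnerSelf (sphere 0 ‖x₀‖) x₀ := by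
    rw [hx₀norm]; exact hmin
  have heig := T'.prop.eq_smul_self_of_isLocalExtrOn (Or.inl hmin'.localize)
  refine ⟨x₀, T'.val.rayleighQuotient x₀, hx₀norm, ?_, ?_⟩
  · exact heig
  · intro w hw
    have h1 : T'.val.rayleighQuotient x₀ = T'.val.reApplyInnerSelf x₀ := by
      simp [ContinuousLinearMap.rayleighQuotient, hx₀norm]
    have h2 := hmin (by simp [hw] : w ∈ sphere (0 : F) 1)
    rw [h1]
    calc T'.val.reApplyInnerSelf x₀ ≤ T'.val.reApplyInnerSelf w := h2
      _ = inner ℝ (T w) w := by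
        simp [ContinuousLinearMap.reApplyInnerSelf, T', real_inner_comm]
        rfl

section Core

variable {K : ℕ}

lemma inner_dp (a b : EuclideanSpace ℝ (Fin K)) :
    (inner ℝ a b : ℝ) = (a : Fin K → ℝ) ⬝ᵥ (b : Fin K → ℝ) := by
  simp [PiLp.inner_apply, dotProduct, RCLike.inner_apply, mul_comm]

lemma core (hK : 2 ≤ K) (G : Matrix (Fin K) (Fin K) ℝ) (hG : G.PosSemidef)
    (hG1 : G.mulVec (fun _ => (1:ℝ)) = 0) (y : Fin K → ℝ) (hy : ∑ k, y k = 0) :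
    sval G (K - 1) * (y ⬝ᵥ y) ≤ y ⬝ᵥ (G *ᵥ y) ∧
      y ⬝ᵥ (G *ᵥ y) ≤ sval G 1 * (y ⬝ᵥ y) := by
  have hK0 : (0:ℕ) < K := by omega
  set E := EuclideanSpace ℝ (Fin K)
  set T : E →ₗ[ℝ] E := Matrix.toEuclideanLin G with hT
  have hTapp : ∀ v : E, T v = G *ᵥ (v : Fin K → ℝ) := fun _ => rfl
  have hGT : Gᵀ = G := by
    have := hG.1
    simpa [Matrix.IsHermitian, Matrix.conjTranspose_eq_transpose_of_trivial] using this
  have hcol : ∀ j, ∑ k, G k j = 0 := by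
    intro j
    have : ∀ k, G k j = G j k := fun k => by conv_lhs => rw [← hGT, Matrix.transpose_apply]
    simp_rw [this]
    have := congrFun hG1 j
    simpa [Matrix.mulVec, dotProduct] using this
  have hTsym : T.IsSymmetric := by
    intro a b
    rw [inner_dp, inner_dp, hTapp, hTapp]
    rw [show ((G *ᵥ (a : Fin K → ℝ)) ⬝ᵥ (b : Fin K → ℝ))
        = (a : Fin K → ℝ) ᵥ* G ⬝ᵥ (b : Fin K → ℝ) by
      rw [← Matrix.mulVec_transpose, hGT]]
    rw [Matrix.dotProduct_mulVec]
  set u1 : E := (WithLp.equiv 2 (Fin K → ℝ)).symm (fun _ => 1) with hu1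
  have hu1app : ∀ i, (u1 : Fin K → ℝ) i = 1 := fun _ => rfl
  have hu1ne : u1 ≠ 0 := by
    intro h
    have := congrFun (congrArg (fun v : E => (v : Fin K → ℝ)) h) ⟨0, hK0⟩
    exact one_ne_zero this
  set P : Submodule ℝ E := (Submodule.span ℝ {u1})ᗮ with hP
  have hmemP : ∀ v : E, v ∈ P ↔ ∑ k, (v : Fin K → ℝ) k = 0 := by
    intro v
    rw [hP, Submodule.mem_orthogonal_singleton_iff_inner_right, inner_dp]
    simp [dotProduct, hu1app]
  have hnormu1 : ‖u1‖ ^ 2 = K := by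
    rw [← real_inner_self_eq_norm_sq, inner_dp]
    simp [dotProduct, hu1app]
  have hrankP : Module.finrank ℝ P = K - 1 := by
    have h2 := Submodule.finrank_add_finrank_orthogonal (K := Submodule.span ℝ {u1}) (E := E)
    rw [finrank_span_singleton hu1ne, ← hP, finrank_euclideanSpace, Fintype.card_fin] at h2
    omega
  have hTzero : ∀ v : E, ∑ k, (T v : Fin K → ℝ) k = 0 := by
    intro v
    rw [hTapp]
    have : ∀ k, (G *ᵥ (v : Fin K → ℝ)) k = ∑ j, G k j * (v : Fin K → ℝ) j := by
      intro k; rfl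
    simp_rw [this]
    rw [Finset.sum_comm]
    simp_rw [← Finset.sum_mul]
    simp [hcol]
  have hTP : ∀ v ∈ P, T v ∈ P := by
    intro v _
    rw [hmemP]
    exact hTzero v
  set S : P →ₗ[ℝ] P := T.restrict hTP with hS
  have hScoe : ∀ a : P, (S a : E) = T (a : E) := fun _ => rfl
  have hSsym : S.IsSymmetric := by
    intro a b
    have h1 : (inner ℝ (S a) b : ℝ) = inner ℝ (T (a : E)) (b : E) := rfl
    have h2 : (inner ℝ a (S b) : ℝ) = inner ℝ (a : E) (T (b : E)) := rfl
    rw [h1, h2, hTsym]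
  have : Nontrivial P := by
    rw [← Module.finrank_pos_iff (R := ℝ)]
    omega
  obtain ⟨z', μ, hz'1, hzeig, hzmin⟩ := exists_min_eigen S hSsym
  set z : E := (z' : E) with hz
  have hz1 : ‖z‖ = 1 := hz'1
  have hzP : z ∈ P := z'.2
  have hzne : z ≠ 0 := by
    intro h; rw [h] at hz1; simp at hz1
  have hTz : T z = μ • z := by
    have := congrArg (fun w : P => (w : E)) hzeig
    simpa [hScoe] using this
  have hμ0 : 0 ≤ μ := by
    have hpsd := hG.dotProduct_mulVec_nonneg (z : Fin K → ℝ)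
    have h1 : star (z : Fin K → ℝ) ⬝ᵥ (G *ᵥ (z : Fin K → ℝ)) = μ := by
      have h2 : (G *ᵥ (z : Fin K → ℝ)) = ((μ • z : E) : Fin K → ℝ) := by
        rw [← hTapp, hTz]
      rw [star_trivial, h2, ← inner_dp z (μ • z)]
      rw [inner_smul_right, real_inner_self_eq_norm_sq, hz1]
      simp
    rw [h1] at hpsd
    exact hpsd
  have hinnerU1Z : (inner ℝ u1 z : ℝ) = 0 :=
    Submodule.mem_orthogonal_singleton_iff_inner_right.mp hzP
  -- Step 1 : sval G (K-1) ≤ μ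
  have hstep1 : sval G (K - 1) ≤ μ := by
    have hne : Nonempty {W : Submodule ℝ E // Module.finrank ℝ W = K - 1} := ⟨⟨P, hrankP⟩⟩
    unfold sval
    apply ciSup_le
    rintro ⟨W, hW⟩
    have hindep : LinearIndependent ℝ ![u1, z] := by
      rw [LinearIndependent.pair_iff]
      intro s t hst
      have hinner : (inner ℝ u1 (s • u1 + t • z) : ℝ) = inner ℝ u1 (0 : E) := by rw [hst]
      rw [inner_add_right, inner_smul_right, inner_smul_right, hinnerU1Z,
        real_inner_self_eq_norm_sq, hnormu1, inner_zero_right] at hinner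
      have hs : s = 0 := by
        have hKne : (K : ℝ) ≠ 0 := Nat.cast_ne_zero.mpr (by omega)
        have : s * (K : ℝ) = 0 := by linarith
        rcases mul_eq_zero.mp this with h | h
        · exact h
        · exact absurd h hKne
      refine ⟨hs, ?_⟩
      rw [hs, zero_smul, zero_add] at hst
      rcases smul_eq_zero.mp hst with h | h
      · exact h
      · exact absurd h hzne
    set S₂ : Submodule ℝ (EuclideanSpace ℝ (Fin K)) := Submodule.span ℝ {u1, z} with hS₂
    have hrange : Set.range ![u1, z] = {u1, z} := by
      ext w; simp [Fin.exists_fin_two, or_comm]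
    have hrankS₂ : Module.finrank ℝ S₂ = 2 := by
      have h := finrank_span_eq_card hindep
      rw [hrange] at h
      simpa using h
    have hdim := Submodule.finrank_sup_add_finrank_inf_eq W S₂
    have hsup : Module.finrank ℝ ↥(W ⊔ S₂) ≤ K := by
      have h := Submodule.finrank_le (W ⊔ S₂)
      rwa [finrank_euclideanSpace, Fintype.card_fin] at h
    rw [hW, hrankS₂] at hdim
    have hinf : 0 < Module.finrank ℝ ↥(W ⊓ S₂) := by omega
    have : Nontrivial ↥(W ⊓ S₂) := Module.finrank_pos_iff.mp hinf
    obtain ⟨x', hx'⟩ := exists_ne (0 : ↥(W ⊓ S₂))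
    set x : E := (x' : E) with hx
    have hxne : x ≠ 0 := fun h => hx' (Subtype.ext h)
    have hxW : x ∈ W := (Submodule.mem_inf.mp x'.2).1
    have hxS₂ : x ∈ S₂ := (Submodule.mem_inf.mp x'.2).2
    obtain ⟨a, b, hab⟩ := Submodule.mem_span_pair.mp hxS₂
    have hTu1 : T u1 = 0 := by
      apply WithLp.ofLp_injective 2
      rw [hTapp, WithLp.ofLp_zero]
      exact hG1
    have hTx : T x = (b * μ) • z := by
      rw [← hab, map_add, LinearMap.map_smul, LinearMap.map_smul, hTu1, hTz, smul_smul, smul_zero, zero_add]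
    have hxnorm : 0 < ‖x‖ := norm_pos_iff.mpr hxne
    have hbx : |b| ≤ ‖x‖ := by
      have h1 : (inner ℝ x z : ℝ) = b := by
        rw [← hab, inner_add_left, inner_smul_left, inner_smul_left, hinnerU1Z,
          real_inner_self_eq_norm_sq, hz1]
        simp
      calc |b| = |(inner ℝ x z : ℝ)| := by rw [h1]
        _ ≤ ‖x‖ * ‖z‖ := abs_real_inner_le_norm x z
        _ = ‖x‖ := by rw [hz1, mul_one]
    set xh : E := ‖x‖⁻¹ • x with hxh
    have hxhW : xh ∈ W := W.smul_mem _ hxW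
    have hxhnorm : ‖xh‖ = 1 := by
      rw [hxh, norm_smul, norm_inv, norm_norm, inv_mul_cancel₀ (ne_of_gt hxnorm)]
    have hTxh : ‖T xh‖ ≤ μ := by
      rw [hxh, LinearMap.map_smul, norm_smul, hTx, norm_smul, hz1, mul_one, norm_inv, norm_norm]
      have h2 : ‖(b * μ : ℝ)‖ = |b| * μ := by
        rw [Real.norm_eq_abs, abs_mul, abs_of_nonneg hμ0]
      rw [h2]
      calc ‖x‖⁻¹ * (|b| * μ) ≤ ‖x‖⁻¹ * (‖x‖ * μ) := by
            apply mul_le_mul_of_nonneg_left (mul_le_mul_of_nonneg_right hbx hμ0)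
              (le_of_lt (inv_pos.mpr hxnorm))
        _ = μ := by field_simp
    have hbdd : BddBelow (Set.range fun (w : {w : E // w ∈ W ∧ ‖w‖ = 1}) =>
        ‖Matrix.toEuclideanLin G w.1‖) := by
      refine ⟨0, ?_⟩
      rintro r ⟨i, rfl⟩
      exact norm_nonneg _
    exact ciInf_le_of_le hbdd ⟨xh, hxhW, hxhnorm⟩ hTxh
  set yE : E := (WithLp.equiv 2 (Fin K → ℝ)).symm y with hyE
  have hyEc : (yE : Fin K → ℝ) = y := rfl
  have hynorm : ‖yE‖ ^ 2 = y ⬝ᵥ y := by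
    rw [← real_inner_self_eq_norm_sq, inner_dp, hyEc]
  have hquad : (inner ℝ (T yE) yE : ℝ) = y ⬝ᵥ (G *ᵥ y) := by
    rw [inner_dp, hTapp, hyEc]
    exact dotProduct_comm _ _
  constructor
  · -- lower bound
    rcases eq_or_ne yE 0 with h0 | h0
    · have hy0 : y = 0 := by rw [← hyEc, h0]; simp
      simp [hy0]
    · have hnpos : 0 < ‖yE‖ := norm_pos_iff.mpr h0
      have hyP : yE ∈ P := by rw [hmemP]; rw [hyEc]; exact hy
      set yh : E := ‖yE‖⁻¹ • yE with hyh
      have hyhP : yh ∈ P := P.smul_mem _ hyP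
      have hyhnorm : ‖yh‖ = 1 := by
        rw [hyh, norm_smul, norm_inv, norm_norm, inv_mul_cancel₀ (ne_of_gt hnpos)]
      have hmin := hzmin ⟨yh, hyhP⟩ hyhnorm
      have h2 : (inner ℝ (S ⟨yh, hyhP⟩) (⟨yh, hyhP⟩ : P) : ℝ) = inner ℝ (T yh) yh := rfl
      rw [h2, hyh, LinearMap.map_smul, real_inner_smul_left, real_inner_smul_right] at hmin
      have hkey : ‖yE‖ ^ 2 * (‖yE‖⁻¹ * (‖yE‖⁻¹ * (inner ℝ (T yE) yE : ℝ)))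
          = inner ℝ (T yE) yE := by
        field_simp
      have h3 : μ * ‖yE‖ ^ 2 ≤ (inner ℝ (T yE) yE : ℝ) := by
        have h4 := mul_le_mul_of_nonneg_left hmin (sq_nonneg ‖yE‖)
        rw [hkey] at h4
        linarith
      calc sval G (K - 1) * (y ⬝ᵥ y) ≤ μ * (y ⬝ᵥ y) := by
            apply mul_le_mul_of_nonneg_right hstep1
            rw [← hynorm]; positivity
        _ ≤ y ⬝ᵥ (G *ᵥ y) := by
            rw [← hquad, ← hynorm]; linarith [h3]
  · -- upper bound
    rcases eq_or_ne yE 0 with h0 | h0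
    · have hy0 : y = 0 := by rw [← hyEc, h0]; simp
      simp [hy0]
    · have hnpos : 0 < ‖yE‖ := norm_pos_iff.mpr h0
      set yh : E := ‖yE‖⁻¹ • yE with hyh
      have hyhnorm : ‖yh‖ = 1 := by
        rw [hyh, norm_smul, norm_inv, norm_norm, inv_mul_cancel₀ (ne_of_gt hnpos)]
      have hyhne : yh ≠ 0 := by
        intro h; rw [h] at hyhnorm; simp at hyhnorm
      set Tc := LinearMap.toContinuousLinearMap T with hTc
      have hTcapp : ∀ v : E, Tc v = T v := fun _ => rfl
      have hbddA : BddAbove (Set.range fun (W : {W : Submodule ℝ (EuclideanSpace ℝ (Fin K)) //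
          Module.finrank ℝ W = 1}) =>
          ⨅ x : {x : EuclideanSpace ℝ (Fin K) // x ∈ W.1 ∧ ‖x‖ = 1},
            ‖Matrix.toEuclideanLin G x.1‖) := by
        refine ⟨‖Tc‖, ?_⟩
        rintro r ⟨⟨W, hW⟩, rfl⟩
        have : Nontrivial W := Module.finrank_pos_iff.mp (by rw [hW]; norm_num)
        obtain ⟨w', hw'⟩ := exists_ne (0 : W)
        have hwne : (w' : EuclideanSpace ℝ (Fin K)) ≠ 0 := fun h => hw' (Subtype.ext h)
        have hwpos : 0 < ‖(w' : EuclideanSpace ℝ (Fin K))‖ := norm_pos_iff.mpr hwne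
        set wh : EuclideanSpace ℝ (Fin K) := ‖(w' : EuclideanSpace ℝ (Fin K))‖⁻¹ • (w' : EuclideanSpace ℝ (Fin K)) with hwh
        have hwhW : wh ∈ W := W.smul_mem _ w'.2
        have hwhn : ‖wh‖ = 1 := by
          rw [hwh, norm_smul, norm_inv, norm_norm, inv_mul_cancel₀ (ne_of_gt hwpos)]
        refine ciInf_le_of_le ⟨0, ?_⟩ ⟨wh, hwhW, hwhn⟩ ?_
        · rintro r ⟨i, rfl⟩; exact norm_nonneg _
        · show ‖T wh‖ ≤ ‖Tc‖
          calc ‖T wh‖ = ‖Tc wh‖ := by rw [hTcapp]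
            _ ≤ ‖Tc‖ * ‖wh‖ := Tc.le_opNorm wh
            _ = ‖Tc‖ := by rw [hwhn, mul_one]
      have hW₀ : Module.finrank ℝ (Submodule.span ℝ {yh}) = 1 := finrank_span_singleton hyhne
      have hTyh : ‖T yh‖ ≤ sval G 1 := by
        unfold sval
        refine le_trans ?_ (le_ciSup hbddA ⟨Submodule.span ℝ {yh}, hW₀⟩)
        have hne2 : Nonempty {x : EuclideanSpace ℝ (Fin K) //
            x ∈ Submodule.span ℝ {yh} ∧ ‖x‖ = 1} :=
          ⟨⟨yh, Submodule.mem_span_singleton_self _, hyhnorm⟩⟩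
        apply le_ciInf
        rintro ⟨w, hwmem, hwn⟩
        obtain ⟨c, hc⟩ := Submodule.mem_span_singleton.mp hwmem
        have hcabs : |c| = 1 := by
          have h5 : ‖w‖ = |c| * ‖yh‖ := by rw [← hc, norm_smul, Real.norm_eq_abs]
          rw [hwn, hyhnorm, mul_one] at h5
          linarith
        show ‖T yh‖ ≤ ‖T w‖
        apply le_of_eq
        calc ‖T yh‖ = |c| * ‖T yh‖ := by rw [hcabs, one_mul]
          _ = ‖c • T yh‖ := by rw [norm_smul, Real.norm_eq_abs]
          _ = ‖T (c • yh)‖ := (congrArg norm (LinearMap.map_smul T c yh)).symm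
          _ = ‖T w‖ := by rw [hc]
      have hTy : ‖T yE‖ = ‖yE‖ * ‖T yh‖ := by
        rw [hyh, LinearMap.map_smul, norm_smul, norm_inv, norm_norm]
        field_simp
      calc y ⬝ᵥ (G *ᵥ y) = (inner ℝ (T yE) yE : ℝ) := hquad.symm
        _ ≤ ‖T yE‖ * ‖yE‖ := real_inner_le_norm _ _
        _ = ‖T yh‖ * ‖yE‖ ^ 2 := by rw [hTy]; ring
        _ ≤ sval G 1 * ‖yE‖ ^ 2 := mul_le_mul_of_nonneg_right hTyh (sq_nonneg _)
        _ = sval G 1 * (y ⬝ᵥ y) := by rw [hynorm]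

end Core


/-- λ_{K−1}(G)·ṼṼ' ⪯ VGV' ⪯ λ_1(G)·ṼṼ'. -/
theorem stmt_12 (d K : ℕ) (hK : 2 ≤ K)
    (V : Matrix (Fin d) (Fin K) ℝ)
    (vbar : Fin d → ℝ) (hvbar : ∀ i, vbar i = (1 / (K : ℝ)) * ∑ k, V i k)
    (Vt : Matrix (Fin d) (Fin K) ℝ) (hVt : ∀ i k, Vt i k = V i k - vbar i)
    (G : Matrix (Fin K) (Fin K) ℝ) (hG : G.PosSemidef)
    (hG1 : G.mulVec (fun _ => (1 : ℝ)) = 0) :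
    (V * G * Vᵀ - sval G (K - 1) • (Vt * Vtᵀ)).PosSemidef ∧
      (sval G 1 • (Vt * Vtᵀ) - V * G * Vᵀ).PosSemidef := by
  have hKne : (K : ℝ) ≠ 0 := Nat.cast_ne_zero.mpr (by omega)
  have hGT : Gᵀ = G := by
    simpa [Matrix.IsHermitian, Matrix.conjTranspose_eq_transpose_of_trivial] using hG.1
  have hcol : ∀ j, ∑ k, G k j = 0 := by
    intro j
    have hsym : ∀ k, G k j = G j k := fun k => by
      conv_lhs => rw [← hGT, Matrix.transpose_apply]
    simp_rw [hsym]
    have := congrFun hG1 j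
    simpa [Matrix.mulVec, dotProduct] using this
  set C : Matrix (Fin d) (Fin K) ℝ := Matrix.of (fun i _ => vbar i) with hC
  have hVt' : Vt = V - C := by
    ext i k; simp [hVt, hC]
  have hCG : C * G = 0 := by
    ext i j
    simp [Matrix.mul_apply, hC, ← Finset.mul_sum, hcol]
  have hGCT : G * Cᵀ = 0 := by
    ext i j
    have h1 := congrFun hG1 i
    simp only [Matrix.mul_apply, hC, Matrix.transpose_apply, Matrix.of_apply,
      Matrix.zero_apply]
    rw [← Finset.sum_mul]
    have h2 : ∑ k, G i k = 0 := by
      simpa [Matrix.mulVec, dotProduct] using h1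
    rw [h2, zero_mul]
  have hVGV : V * G * Vᵀ = Vt * G * Vtᵀ := by
    have h1 : Vt * G = V * G := by rw [hVt', Matrix.sub_mul, hCG, sub_zero]
    rw [h1, hVt', Matrix.transpose_sub, Matrix.mul_sub, Matrix.mul_assoc V G Cᵀ, hGCT,
      Matrix.mul_zero, sub_zero, Matrix.mul_assoc]
  -- Hermitian parts
  have htriv : ∀ {m n : Type} [Fintype m] [Fintype n] (A : Matrix m n ℝ), Aᴴ = Aᵀ := by
    intro m n _ _ A
    ext i j
    simp [Matrix.conjTranspose_apply]
  have hH1 : (V * G * Vᵀ).IsHermitian := by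
    rw [Matrix.IsHermitian, htriv, Matrix.transpose_mul, Matrix.transpose_mul,
      Matrix.transpose_transpose, hGT, ← Matrix.mul_assoc]
  have hH2 : (Vt * Vtᵀ).IsHermitian := by
    rw [Matrix.IsHermitian, htriv, Matrix.transpose_mul, Matrix.transpose_transpose]
  have hHs : ∀ c : ℝ, (c • (Vt * Vtᵀ)).IsHermitian := by
    intro c
    have hH2T : (Vt * Vtᵀ)ᵀ = Vt * Vtᵀ := by rw [← htriv]; exact hH2
    rw [Matrix.IsHermitian, htriv, Matrix.transpose_smul, hH2T]
  -- quadratic forms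
  have hquad : ∀ x : Fin d → ℝ,
      x ⬝ᵥ ((V * G * Vᵀ) *ᵥ x) = (Vtᵀ *ᵥ x) ⬝ᵥ (G *ᵥ (Vtᵀ *ᵥ x)) ∧
      x ⬝ᵥ ((Vt * Vtᵀ) *ᵥ x) = (Vtᵀ *ᵥ x) ⬝ᵥ (Vtᵀ *ᵥ x) := by
    intro x
    constructor
    · rw [hVGV, ← Matrix.mulVec_mulVec, ← Matrix.mulVec_mulVec,
        Matrix.dotProduct_mulVec, ← Matrix.mulVec_transpose]
    · rw [← Matrix.mulVec_mulVec, Matrix.dotProduct_mulVec, ← Matrix.mulVec_transpose]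
  have hsum : ∀ x : Fin d → ℝ, ∑ k, (Vtᵀ *ᵥ x) k = 0 := by
    intro x
    have h1 : ∀ k, (Vtᵀ *ᵥ x) k = ∑ i, Vt i k * x i := by
      intro k
      simp [Matrix.mulVec, dotProduct, Matrix.transpose_apply]
    simp_rw [h1]
    rw [Finset.sum_comm]
    have h2 : ∀ i, ∑ k, Vt i k * x i = 0 := by
      intro i
      rw [← Finset.sum_mul]
      have h3 : ∑ k, Vt i k = 0 := by
        simp_rw [hVt]
        rw [Finset.sum_sub_distrib]
        simp [hvbar i, Finset.sum_const]
        field_simp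
        ring
      rw [h3, zero_mul]
    simp [h2]
  constructor
  · refine Matrix.PosSemidef.of_dotProduct_mulVec_nonneg (hH1.sub (hHs _)) ?_
    intro x
    rw [star_trivial]
    rw [Matrix.sub_mulVec, dotProduct_sub, Matrix.smul_mulVec,
      dotProduct_smul, smul_eq_mul]
    rw [(hquad x).1, (hquad x).2]
    have := (core hK G hG hG1 (Vtᵀ *ᵥ x) (hsum x)).1
    linarith
  · refine Matrix.PosSemidef.of_dotProduct_mulVec_nonneg ((hHs _).sub hH1) ?_
    intro x
    rw [star_trivial]
    rw [Matrix.sub_mulVec, dotProduct_sub, Matrix.smul_mulVec,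
      dotProduct_smul, smul_eq_mul]
    rw [(hquad x).1, (hquad x).2]
    have := (core hK G hG hG1 (Vtᵀ *ᵥ x) (hsum x)).2
    linarith
end

section
/- For d ≥ 2 and x₀ ≥ d, one has 2·x₀^{d/2−1}·e^{−x₀/2} ≤ ∫_{x₀}^∞ x^{d/2−1} e^{−x/2} dx ≤ x₀·x₀^{d/2−1}·e^{−x₀/2}. -/
open MeasureTheory

/-- Integral of `exp (-b * x)` over `Ioi x₀`. -/
lemma aux_int_exp (x₀ : ℝ) {b : ℝ} (hb : 0 < b) :
    (∫ x in Set.Ioi x₀, Real.exp (-b * x)) = Real.exp (-b * x₀) / b := by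
  have h : ∀ x ∈ Set.Ici x₀, HasDerivAt (fun x => -Real.exp (-b * x) / b)
      (Real.exp (-b * x)) x := by
    intro x _
    have : HasDerivAt (fun x : ℝ => -b * x) (-b) x := by
      simpa using (hasDerivAt_id x).const_mul (-b)
    simpa [hb.ne'] using this.exp.neg.div_const b
  have htend : Filter.Tendsto (fun x => -Real.exp (-b * x) / b) Filter.atTop (nhds (-0 / b)) := by
    refine Filter.Tendsto.div_const (Filter.Tendsto.neg ?_) _
    exact Real.tendsto_exp_atBot.comp (Filter.tendsto_id.const_mul_atTop_of_neg (by linarith))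
  have := MeasureTheory.integral_Ioi_of_hasDerivAt_of_tendsto
    ((h x₀ Set.self_mem_Ici).continuousAt.continuousWithinAt)
    (fun x hx => h x (Set.mem_Ici.mpr (le_of_lt hx))) (exp_neg_integrableOn_Ioi x₀ hb) htend
  rw [this]
  ring

/-- `t ^ a ≤ exp (a * (t - 1))` for `t > 0`, `a ≥ 0`. -/
lemma aux_rpow_le (a t : ℝ) (ha : 0 ≤ a) (ht : 0 < t) :
    t ^ a ≤ Real.exp (a * (t - 1)) := by
  rw [Real.rpow_def_of_pos ht, Real.exp_le_exp, mul_comm a]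
  exact mul_le_mul_of_nonneg_right (Real.log_le_sub_one_of_pos ht) ha

/-- two-sided bounds for the chi-square tail integral. -/
theorem stmt_16 (d : ℕ) (hd : 2 ≤ d) (x₀ : ℝ) (hx₀ : (d : ℝ) ≤ x₀) :
    2 * x₀ ^ ((d : ℝ) / 2 - 1) * Real.exp (-x₀ / 2) ≤
        (∫ x in Set.Ioi x₀, x ^ ((d : ℝ) / 2 - 1) * Real.exp (-x / 2)) ∧
      (∫ x in Set.Ioi x₀, x ^ ((d : ℝ) / 2 - 1) * Real.exp (-x / 2)) ≤
        x₀ * x₀ ^ ((d : ℝ) / 2 - 1) * Real.exp (-x₀ / 2) := by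
  set a : ℝ := (d : ℝ) / 2 - 1 with ha_def
  have hd2 : (2 : ℝ) ≤ (d : ℝ) := by exact_mod_cast hd
  have ha : 0 ≤ a := by simp only [ha_def]; linarith
  have hx0 : (2 : ℝ) ≤ x₀ := le_trans hd2 hx₀
  have hx0pos : (0 : ℝ) < x₀ := by linarith
  set c : ℝ := 1 / 2 - a / x₀ with hc_def
  have hax : a ≤ x₀ / 2 - 1 := by simp only [ha_def]; linarith
  have hc : 1 / x₀ ≤ c := by
    have : a / x₀ ≤ (x₀ / 2 - 1) / x₀ := div_le_div_of_nonneg_right hax hx0pos.le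
    have h2 : (x₀ / 2 - 1) / x₀ = 1 / 2 - 1 / x₀ := by field_simp
    simp only [hc_def]
    rw [h2] at this
    linarith
  have hcpos : 0 < c := lt_of_lt_of_le (by positivity) hc
  -- upper pointwise bound
  have hupper : ∀ x ∈ Set.Ioi x₀, x ^ a * Real.exp (-x / 2) ≤
      (x₀ ^ a * Real.exp (-a)) * Real.exp (-c * x) := by
    intro x hx
    have hxx : x₀ < x := hx
    have hxpos : 0 < x := lt_trans hx0pos hxx
    have ht : 0 < x / x₀ := by positivity
    have h1 : x ^ a ≤ x₀ ^ a * Real.exp (a * (x / x₀ - 1)) := by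
      have := aux_rpow_le a (x / x₀) ha ht
      have hx' : x ^ a = x₀ ^ a * (x / x₀) ^ a := by
        rw [← Real.mul_rpow (le_of_lt hx0pos) (le_of_lt ht)]
        congr 1
        field_simp
      rw [hx']
      exact mul_le_mul_of_nonneg_left this (Real.rpow_nonneg (le_of_lt hx0pos) a)
    have h2 : x₀ ^ a * Real.exp (a * (x / x₀ - 1)) * Real.exp (-x / 2) =
        (x₀ ^ a * Real.exp (-a)) * Real.exp (-c * x) := by
      rw [mul_assoc, mul_assoc, ← Real.exp_add, ← Real.exp_add]
      congr 2
      simp only [hc_def]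
      field_simp
      ring
    calc x ^ a * Real.exp (-x / 2)
        ≤ x₀ ^ a * Real.exp (a * (x / x₀ - 1)) * Real.exp (-x / 2) :=
          mul_le_mul_of_nonneg_right h1 (Real.exp_pos _).le
      _ = _ := h2
  -- integrability
  have hmeas : AEStronglyMeasurable (fun x : ℝ => x ^ a * Real.exp (-x / 2))
      (volume.restrict (Set.Ioi x₀)) := by
    apply Measurable.aestronglyMeasurable
    fun_prop
  have hgint : IntegrableOn (fun x : ℝ => (x₀ ^ a * Real.exp (-a)) * Real.exp (-c * x))
      (Set.Ioi x₀) := (exp_neg_integrableOn_Ioi x₀ hcpos).const_mul _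
  have hfint : IntegrableOn (fun x : ℝ => x ^ a * Real.exp (-x / 2)) (Set.Ioi x₀) := by
    refine MeasureTheory.Integrable.mono hgint hmeas ?_
    filter_upwards [ae_restrict_mem measurableSet_Ioi] with x hx
    have hxpos : 0 < x := lt_trans hx0pos hx
    rw [Real.norm_of_nonneg (by positivity), Real.norm_of_nonneg (by positivity)]
    exact hupper x hx
  constructor
  · -- lower bound
    have hlow : ∀ x ∈ Set.Ioi x₀, x₀ ^ a * Real.exp (-(1/2) * x) ≤
        x ^ a * Real.exp (-x / 2) := by
      intro x hx
      have : x₀ ^ a ≤ x ^ a := Real.rpow_le_rpow (le_of_lt hx0pos) (le_of_lt hx) ha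
      have he : Real.exp (-(1/2) * x) = Real.exp (-x / 2) := by norm_num; ring_nf
      rw [he]
      exact mul_le_mul_of_nonneg_right this (Real.exp_pos _).le
    have hint2 : (∫ x in Set.Ioi x₀, x₀ ^ a * Real.exp (-(1/2) * x)) =
        x₀ ^ a * (Real.exp (-(1/2) * x₀) / (1/2)) := by
      rw [MeasureTheory.integral_const_mul, aux_int_exp x₀ (by norm_num : (0:ℝ) < 1/2)]
    have hmono := MeasureTheory.setIntegral_mono_on
      ((exp_neg_integrableOn_Ioi x₀ (by norm_num : (0:ℝ) < 1/2)).const_mul (x₀ ^ a))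
      hfint measurableSet_Ioi hlow
    rw [hint2] at hmono
    have : x₀ ^ a * (Real.exp (-(1/2) * x₀) / (1/2)) = 2 * x₀ ^ a * Real.exp (-x₀ / 2) := by
      have : (-(1/2) * x₀ : ℝ) = -x₀ / 2 := by ring
      rw [this]; ring
    linarith [hmono, this ▸ hmono]
  · -- upper bound
    have hmono := MeasureTheory.setIntegral_mono_on hfint hgint measurableSet_Ioi hupper
    have hint3 : (∫ x in Set.Ioi x₀, (x₀ ^ a * Real.exp (-a)) * Real.exp (-c * x)) =
        (x₀ ^ a * Real.exp (-a)) * (Real.exp (-c * x₀) / c) := by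
      rw [MeasureTheory.integral_const_mul, aux_int_exp x₀ hcpos]
    rw [hint3] at hmono
    have hval : (x₀ ^ a * Real.exp (-a)) * (Real.exp (-c * x₀) / c) =
        x₀ ^ a * Real.exp (-x₀ / 2) * (1 / c) := by
      have hexp : Real.exp (-a) * Real.exp (-c * x₀) = Real.exp (-x₀ / 2) := by
        rw [← Real.exp_add]
        congr 1
        simp only [hc_def]
        field_simp
        ring
      calc (x₀ ^ a * Real.exp (-a)) * (Real.exp (-c * x₀) / c)
          = x₀ ^ a * (Real.exp (-a) * Real.exp (-c * x₀)) * (1 / c) := by ring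
        _ = x₀ ^ a * Real.exp (-x₀ / 2) * (1 / c) := by rw [hexp]
    have hinv : 1 / c ≤ x₀ := by
      rw [div_le_iff₀ hcpos]
      calc (1:ℝ) = x₀ * (1 / x₀) := by field_simp
        _ ≤ x₀ * c := mul_le_mul_of_nonneg_left hc (le_of_lt hx0pos)
    have hfin : x₀ ^ a * Real.exp (-x₀ / 2) * (1 / c) ≤ x₀ * x₀ ^ a * Real.exp (-x₀ / 2) := by
      have hpos : 0 ≤ x₀ ^ a * Real.exp (-x₀ / 2) := by positivity
      calc x₀ ^ a * Real.exp (-x₀ / 2) * (1 / c)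
          ≤ x₀ ^ a * Real.exp (-x₀ / 2) * x₀ := mul_le_mul_of_nonneg_left hinv hpos
        _ = x₀ * x₀ ^ a * Real.exp (-x₀ / 2) := by ring
    calc _ ≤ _ := hmono
      _ = _ := hval
      _ ≤ _ := hfin
end
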